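/- Let a = (a_1,…,a_n) with all a_i > 0 and n ≥ 4. Then the diagonal space DS(a) is a convex subset of ℝ^{n-3}; in particular it is connected. -/
import Mathlib


/-- `R_k^min = max_{1 ≤ i ≤ k} (2 a_i − Σ_{j=1}^k a_j)`. -/
noncomputable def Rmin (a : ℕ → ℝ) (k : ℕ) : ℝ :=
  sSup ((fun i => 2 * a i - ∑ j ∈ Finset.Icc 1 k, a j) '' Set.Icc 1 k)

/-- Membership of a vector of diagonal lengths `(L_2, …, L_{n-2})` (encoded as a function
`L : ℕ → ℝ`, with the convention `L (n-1) = a n`) in the diagonal space `DS(a)`: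
for every `1 ≤ k ≤ n−3` one has `|L_{n-k} − a_{n-k}| ≤ L_{n-k-1} ≤ L_{n-k} + a_{n-k}`
and `max(0, R_{n-k-1}^min) ≤ L_{n-k-1} ≤ R_{n-k-1}^max`. -/
def memDS (a : ℕ → ℝ) (n : ℕ) (L : ℕ → ℝ) : Prop :=
  ∀ k, 1 ≤ k → k ≤ n - 3 →
    |L (n - k) - a (n - k)| ≤ L (n - k - 1) ∧
    L (n - k - 1) ≤ L (n - k) + a (n - k) ∧
    max 0 (Rmin a (n - k - 1)) ≤ L (n - k - 1) ∧
    L (n - k - 1) ≤ ∑ j ∈ Finset.Icc 1 (n - k - 1), a j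

/-- The diagonal space `DS(a)` is a convex subset; in particular it is (pre)connected. -/
theorem DS_convex_and_preconnected
    (n : ℕ) (hn : 4 ≤ n) (a : ℕ → ℝ) (ha : ∀ i, 1 ≤ i → i ≤ n → 0 < a i) :
    Convex ℝ {L : ℕ → ℝ | L (n - 1) = a n ∧ memDS a n L} ∧
    IsPreconnected {L : ℕ → ℝ | L (n - 1) = a n ∧ memDS a n L} := by
  have hconv : Convex ℝ {L : ℕ → ℝ | L (n - 1) = a n ∧ memDS a n L} := by
    intro x hx y hy s t hs ht hst
    simp only [Set.mem_setOf_eq] at hx hy ⊢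
    constructor
    · have : (s • x + t • y) (n - 1) = s * x (n - 1) + t * y (n - 1) := rfl
      rw [this, hx.1, hy.1]
      linear_combination (a n) * hst
    · intro k hk1 hk2
      obtain ⟨h1x, h2x, h3x, h4x⟩ := hx.2 k hk1 hk2
      obtain ⟨h1y, h2y, h3y, h4y⟩ := hy.2 k hk1 hk2
      have e1 : (s • x + t • y) (n - k) = s * x (n - k) + t * y (n - k) := rfl
      have e2 : (s • x + t • y) (n - k - 1) = s * x (n - k - 1) + t * y (n - k - 1) := rfl
      rw [e1, e2]
      refine ⟨?_, ?_, ?_, ?_⟩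
      case refine_2 =>
        have hc : s * a (n - k) + t * a (n - k) = a (n - k) := by
          linear_combination (a (n - k)) * hst
        linarith [mul_le_mul_of_nonneg_left h2x hs, mul_le_mul_of_nonneg_left h2y ht]
      case refine_4 =>
        have hc : s * (∑ j ∈ Finset.Icc 1 (n - k - 1), a j)
            + t * (∑ j ∈ Finset.Icc 1 (n - k - 1), a j)
            = ∑ j ∈ Finset.Icc 1 (n - k - 1), a j := by
          linear_combination (∑ j ∈ Finset.Icc 1 (n - k - 1), a j) * hst
        linarith [mul_le_mul_of_nonneg_left h4x hs, mul_le_mul_of_nonneg_left h4y ht]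
      · have key : s * x (n - k) + t * y (n - k) - a (n - k)
            = s * (x (n - k) - a (n - k)) + t * (y (n - k) - a (n - k)) := by
          linear_combination (a (n - k)) * hst
        calc |s * x (n - k) + t * y (n - k) - a (n - k)|
            ≤ |s * (x (n - k) - a (n - k))| + |t * (y (n - k) - a (n - k))| := by
              rw [key]; exact abs_add_le _ _
          _ = s * |x (n - k) - a (n - k)| + t * |y (n - k) - a (n - k)| := by
              rw [abs_mul, abs_mul, abs_of_nonneg hs, abs_of_nonneg ht]
          _ ≤ s * x (n - k - 1) + t * y (n - k - 1) := by
              have := abs_nonneg (x (n - k) - a (n - k))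
              have := abs_nonneg (y (n - k) - a (n - k))
              nlinarith
      · have hm := le_max_left (0:ℝ) (Rmin a (n - k - 1))
        have px := mul_le_mul_of_nonneg_left h3x hs
        have py := mul_le_mul_of_nonneg_left h3y ht
        have hc : s * (max 0 (Rmin a (n - k - 1))) + t * (max 0 (Rmin a (n - k - 1)))
            = max 0 (Rmin a (n - k - 1)) := by
          linear_combination (max 0 (Rmin a (n - k - 1))) * hst
        linarith
  exact ⟨hconv, hconv.isPreconnected⟩
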